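/- Given a 𝒞-index i of f (f = f_i), membership of f in the anticomplex set A_{𝒞,h} is decidable uniformly in i: there is a computable function d : ℕ → Bool such that d(i) = true iff f_i ∈ A_{𝒞,h}. -/

import Mathlib

/-- `f` extends the finite sequence `v`. -/
def Extends (f : ℕ → ℕ) (v : List ℕ) : Prop := ∀ j, ∀ _h : j < v.length, f j = v.getD j 0

/-- prefix `f↾n = (f 0, …, f (n-1))`. -/
def pref (f : ℕ → ℕ) (n : ℕ) : List ℕ := (List.range n).map f

/-- `K_𝒞` of a finite sequence, where `𝒞 = {F i : i ∈ ℕ}`. -/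
noncomputable def KCv (F : ℕ → ℕ → ℕ) (v : List ℕ) : ℕ∞ :=
  sInf ((fun i : ℕ => (i : ℕ∞)) '' {i | Extends (F i) v})

/-- `K_𝒞` of a function. -/
noncomputable def KCf (F : ℕ → ℕ → ℕ) (f : ℕ → ℕ) : ℕ∞ :=
  sInf ((fun i : ℕ => (i : ℕ∞)) '' {i | F i = f})

lemma pref_length (f : ℕ → ℕ) (n : ℕ) : (pref f n).length = n := by simp [pref]

lemma extends_pref_iff (g f : ℕ → ℕ) (n : ℕ) :
    Extends g (pref f n) ↔ ∀ j < n, g j = f j := by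
  constructor
  · intro H j hj
    have := H j (by simpa [pref_length] using hj)
    simpa [pref, List.getD_eq_getElem?_getD, List.getElem?_map, List.getElem?_range hj] using this
  · intro H j hj
    rw [pref_length] at hj
    simp [pref, List.getD_eq_getElem?_getD, List.getElem?_map, List.getElem?_range hj, H j hj]

lemma pref_eq_iff (g f : ℕ → ℕ) (n : ℕ) :
    pref g n = pref f n ↔ ∀ j < n, g j = f j := by
  simp [pref, List.map_eq_map_iff]

lemma KCv_le_iff (F : ℕ → ℕ → ℕ) (v : List ℕ) (j : ℕ) :
    KCv F v ≤ (j : ℕ∞) ↔ ∃ k ≤ j, Extends (F k) v := by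
  constructor
  · intro hle
    by_contra hno
    push_neg at hno
    have hb : ((j + 1 : ℕ) : ℕ∞) ≤ KCv F v := by
      apply le_sInf
      rintro x ⟨k, hk, rfl⟩
      have hlt : j < k := by
        by_contra hlt
        exact hno k (le_of_not_gt hlt) hk
      exact Nat.cast_le.mpr (Nat.succ_le_of_lt hlt)
    have hj : ((j + 1 : ℕ) : ℕ∞) ≤ ((j : ℕ) : ℕ∞) := hb.trans hle
    have := Nat.cast_le.mp hj
    omega
  · rintro ⟨k, hkj, hext⟩
    exact le_trans (sInf_le ⟨k, hext, rfl⟩) (Nat.cast_le.mpr hkj)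

/-- bounded existential checker (`1` iff there is `j < t` with `pref (F j) n = pref (F i) n`). -/
def Qn (F : ℕ → ℕ → ℕ) (i n : ℕ) : ℕ → ℕ
  | 0 => 0
  | t + 1 => cond (decide (pref (F t) n = pref (F i) n)) 1 (Qn F i n t)

lemma Qn_iff (F : ℕ → ℕ → ℕ) (i n t : ℕ) :
    Qn F i n t = 1 ↔ ∃ j < t, pref (F j) n = pref (F i) n := by
  induction t with
  | zero => simp [Qn]
  | succ t ih =>
    constructor
    · intro H
      by_cases he : pref (F t) n = pref (F i) n
      · exact ⟨t, Nat.lt_succ_self t, he⟩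
      · simp only [Qn, decide_eq_false he, cond_false] at H
        obtain ⟨j, hj, hje⟩ := ih.mp H
        exact ⟨j, Nat.lt_succ_of_lt hj, hje⟩
    · rintro ⟨j, hj, hje⟩
      rcases Nat.lt_succ_iff_lt_or_eq.mp hj with hj' | rfl
      · by_cases he : pref (F t) n = pref (F i) n
        · simp [Qn, he]
        · simp only [Qn, decide_eq_false he, cond_false]
          exact ih.mpr ⟨j, hj', hje⟩
      · simp [Qn, hje]

/-- bounded universal checker. -/
def Pn (F : ℕ → ℕ → ℕ) (h : ℕ → ℕ) (i : ℕ) : ℕ → ℕ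
  | 0 => 1
  | t + 1 => cond (decide (Qn F i t (h t + 1) = 1)) (Pn F h i t) 0

lemma Pn_iff (F : ℕ → ℕ → ℕ) (h : ℕ → ℕ) (i t : ℕ) :
    Pn F h i t = 1 ↔ ∀ n < t, Qn F i n (h n + 1) = 1 := by
  induction t with
  | zero => simp [Pn]
  | succ t ih =>
    by_cases hq : Qn F i t (h t + 1) = 1
    · simp only [Pn, hq, decide_true, cond_true, ih]
      constructor
      · intro H n hn
        rcases Nat.lt_succ_iff_lt_or_eq.mp hn with hn' | rfl
        · exact H n hn'
        · exact hq
      · intro H n hn; exact H n (Nat.lt_succ_of_lt hn)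
    · simp only [Pn, decide_eq_false hq, cond_false]
      constructor
      · intro H; exact absurd H.symm one_ne_zero
      · intro H; exact absurd (H t (Nat.lt_succ_self t)) hq

lemma pref_comp (f : ℕ → ℕ) (n : ℕ) :
    pref f n = Nat.rec (motive := fun _ => List ℕ) [] (fun y IH => IH ++ [f y]) n := by
  induction n with
  | zero => simp [pref]
  | succ n ih => simp [pref, List.range_succ] at ih ⊢; rw [← ih]

lemma Qn_comp (F : ℕ → ℕ → ℕ) (i n t : ℕ) :
    Qn F i n t = Nat.rec (motive := fun _ => ℕ) 0
      (fun y IH => cond (decide (pref (F y) n = pref (F i) n)) 1 IH) t := by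
  induction t with
  | zero => rfl
  | succ t ih => simp only [Qn, ih]

lemma Pn_comp (F : ℕ → ℕ → ℕ) (h : ℕ → ℕ) (i t : ℕ) :
    Pn F h i t = Nat.rec (motive := fun _ => ℕ) 1
      (fun y IH => cond (decide (Qn F i y (h y + 1) = 1)) IH 0) t := by
  induction t with
  | zero => rfl
  | succ t ih => simp only [Pn, ih]

lemma comp_pref (F : ℕ → ℕ → ℕ) (hF : Computable fun p : ℕ × ℕ => F p.1 p.2) :
    Computable fun p : ℕ × ℕ => pref (F p.1) p.2 := by
  have hF2 : Computable₂ F := hF.to₂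
  have hstep : Computable fun q : (ℕ × ℕ) × ℕ × List ℕ => q.2.2 ++ [F q.1.1 q.2.1] :=
    Computable₂.comp (f := fun (l : List ℕ) (l' : List ℕ) => l ++ l')
      (g := fun q : (ℕ × ℕ) × ℕ × List ℕ => q.2.2)
      (h := fun q : (ℕ × ℕ) × ℕ × List ℕ => [F q.1.1 q.2.1])
      Computable.list_append (Computable.snd.comp Computable.snd)
      (Computable₂.comp (f := fun (x : ℕ) (l : List ℕ) => x :: l)
        (g := fun q : (ℕ × ℕ) × ℕ × List ℕ => F q.1.1 q.2.1)
        (h := fun _ : (ℕ × ℕ) × ℕ × List ℕ => ([] : List ℕ))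
        Computable.list_cons
        (hF2.comp (Computable.fst.comp Computable.fst) (Computable.fst.comp Computable.snd))
        (Computable.const []))
  have := Computable.nat_rec (α := ℕ × ℕ) (σ := List ℕ)
    (f := fun p => p.2) (g := fun _ => ([] : List ℕ))
    (h := fun p q => q.2 ++ [F p.1 q.1])
    Computable.snd (Computable.const _) hstep.to₂
  exact this.of_eq fun p => (pref_comp (F p.1) p.2).symm

lemma comp_Qn (F : ℕ → ℕ → ℕ) (hF : Computable fun p : ℕ × ℕ => F p.1 p.2)
    (h : ℕ → ℕ) (hc : Computable h) :
    Computable fun p : ℕ × ℕ => Qn F p.1 p.2 (h p.2 + 1) := by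
  have hpref2 : Computable₂ fun i n => pref (F i) n := (comp_pref F hF).to₂
  have hdec : Computable fun q : (ℕ × ℕ) × ℕ × ℕ =>
      (decide (pref (F q.2.1) q.1.2 = pref (F q.1.1) q.1.2) : Bool) :=
    Computable₂.comp (f := fun x y : List ℕ => (decide (x = y) : Bool))
      (g := fun q : (ℕ × ℕ) × ℕ × ℕ => pref (F q.2.1) q.1.2)
      (h := fun q : (ℕ × ℕ) × ℕ × ℕ => pref (F q.1.1) q.1.2)
      Primrec.eq.decide.to_comp
      (hpref2.comp (Computable.fst.comp Computable.snd) (Computable.snd.comp Computable.fst))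
      (hpref2.comp (Computable.fst.comp Computable.fst) (Computable.snd.comp Computable.fst))
  have hstep : Computable fun q : (ℕ × ℕ) × ℕ × ℕ =>
      cond (decide (pref (F q.2.1) q.1.2 = pref (F q.1.1) q.1.2)) 1 q.2.2 :=
    Computable.cond hdec (Computable.const 1) (Computable.snd.comp Computable.snd)
  have := Computable.nat_rec (α := ℕ × ℕ) (σ := ℕ)
    (f := fun p => h p.2 + 1) (g := fun _ => 0)
    (h := fun p q => cond (decide (pref (F q.1) p.2 = pref (F p.1) p.2)) 1 q.2)
    (Computable.succ.comp (hc.comp Computable.snd)) (Computable.const _) hstep.to₂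
  exact this.of_eq fun p => (Qn_comp F p.1 p.2 (h p.2 + 1)).symm

lemma comp_Pn (F : ℕ → ℕ → ℕ) (hF : Computable fun p : ℕ × ℕ => F p.1 p.2)
    (h : ℕ → ℕ) (hc : Computable h) (m : ℕ → ℕ) (hm : Computable m) :
    Computable fun i : ℕ => Pn F h i (m i) := by
  have hQ := comp_Qn F hF h hc
  have hdec : Computable fun q : ℕ × ℕ × ℕ =>
      (decide (Qn F q.1 q.2.1 (h q.2.1 + 1) = 1) : Bool) :=
    Computable₂.comp (f := fun x y : ℕ => (decide (x = y) : Bool))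
      (g := fun q : ℕ × ℕ × ℕ => Qn F q.1 q.2.1 (h q.2.1 + 1))
      (h := fun _ : ℕ × ℕ × ℕ => 1)
      Primrec.eq.decide.to_comp
      (Computable.comp (f := fun p : ℕ × ℕ => Qn F p.1 p.2 (h p.2 + 1))
        (g := fun q : ℕ × ℕ × ℕ => (q.1, q.2.1))
        hQ (Computable.fst.pair (Computable.fst.comp Computable.snd)))
      (Computable.const 1)
  have hstep : Computable fun q : ℕ × ℕ × ℕ =>
      cond (decide (Qn F q.1 q.2.1 (h q.2.1 + 1) = 1)) q.2.2 0 :=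
    Computable.cond hdec (Computable.snd.comp Computable.snd) (Computable.const 0)
  have := Computable.nat_rec (α := ℕ) (σ := ℕ)
    (f := m) (g := fun _ => 1)
    (h := fun i q => cond (decide (Qn F i q.1 (h q.1 + 1) = 1)) q.2 0)
    hm (Computable.const _) hstep.to₂
  exact this.of_eq fun i => (Pn_comp F h i (m i)).symm
theorem stmt5 (F : ℕ → ℕ → ℕ) (hF : Computable fun p : ℕ × ℕ => F p.1 p.2)
    (b : List ℕ → ℕ) (hb : Computable b) (hbw : ∀ v, Extends (F (b v)) v)
    (h : ℕ → ℕ) (hc : Computable h) (hmono : Monotone h)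
    (m : ℕ → ℕ) (hm : Computable m) (hmod : ∀ k, k ≤ h (m k)) :
    ∃ d : ℕ → Bool, Computable d ∧
      ∀ i, d i = true ↔ ∀ n, KCv F (pref (F i) n) ≤ (h n : ℕ∞) := by
  have hP := comp_Pn F hF h hc m hm
  have hd : Computable fun i : ℕ => (decide (Pn F h i (m i) = 1) : Bool) :=
    Computable₂.comp (f := fun x y : ℕ => (decide (x = y) : Bool))
      (g := fun i : ℕ => Pn F h i (m i)) (h := fun _ : ℕ => 1)
      Primrec.eq.decide.to_comp hP (Computable.const 1)
  refine ⟨fun i => decide (Pn F h i (m i) = 1), hd, fun i => ?_⟩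
  rw [decide_eq_true_iff, Pn_iff]
  constructor
  · intro H n
    rcases lt_or_ge n (m i) with hn | hn
    · rcases (Qn_iff F i n (h n + 1)).mp (H n hn) with ⟨j, hj, hje⟩
      rw [KCv_le_iff]
      exact ⟨j, Nat.lt_succ_iff.mp hj, (extends_pref_iff _ _ _).mpr ((pref_eq_iff _ _ _).mp hje)⟩
    · rw [KCv_le_iff]
      refine ⟨i, le_trans (hmod i) (hmono hn), ?_⟩
      rw [extends_pref_iff]
      intro j _; rfl
  · intro H n _
    rcases (KCv_le_iff F (pref (F i) n) (h n)).mp (H n) with ⟨k, hk, hext⟩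
    rw [Qn_iff]
    exact ⟨k, Nat.lt_succ_of_le hk,
      (pref_eq_iff _ _ _).mpr ((extends_pref_iff _ _ _).mp hext)⟩
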